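/- Let M ≥ 1 be an integer and N = 2^{M+1}, and let {p_n} be the Prouhet–Thue–Morse sequence. Then the function f : ℝ → ℂ defined by f(θ) = Σ_{n=0}^{N−1} (−1)^{p_n} e^{inθ} has a spectral null of order M at θ = 0, i.e., the m-th derivative of f at θ = 0 vanishes for every integer m with 0 ≤ m ≤ M. -/

import Mathlib

open Complex Finset

private lemma ptm_split (K : ℕ) (g : ℕ → ℂ) :
    ∑ n ∈ range (2 * K), g n = ∑ k ∈ range K, (g (2*k) + g (2*k+1)) := by
  induction K with
  | zero => simp
  | succ K ih =>
    rw [Nat.mul_succ, Finset.sum_range_succ, Finset.sum_range_succ, Finset.sum_range_succ, ih]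
    ring

private lemma ptm_le_one (p : ℕ → ℕ) (hp0 : p 0 = 0) (hpe : ∀ k, p (2 * k) = p k)
    (hpo : ∀ k, p (2 * k + 1) = 1 - p k) : ∀ n, p n ≤ 1 := by
  intro n
  induction n using Nat.strong_induction_on with
  | _ n ih =>
    rcases Nat.even_or_odd n with ⟨k, hk⟩ | ⟨k, hk⟩
    · rcases Nat.eq_zero_or_pos k with rfl | hkpos
      · simpa [hp0] using (by omega : n = 0) ▸ (by simp [hp0])
      · have : n = 2 * k := by omega
        rw [this, hpe]
        exact ih k (by omega)
    · have : n = 2 * k + 1 := by omega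
      rw [this, hpo]
      omega

private lemma ptm_key (p : ℕ → ℕ) (hp0 : p 0 = 0) (hpe : ∀ k, p (2 * k) = p k)
    (hpo : ∀ k, p (2 * k + 1) = 1 - p k) :
    ∀ m L : ℕ, m < L → ∑ n ∈ range (2^L), (-1:ℂ)^(p n) * (n:ℂ)^m = 0 := by
  have hple := ptm_le_one p hp0 hpe hpo
  have hneg : ∀ k, ((-1:ℂ))^(p (2*k+1)) = -(-1:ℂ)^(p k) := by
    intro k
    have h1 := hple k
    interval_cases h : p k <;> simp [hpo, h]
  intro m
  induction m using Nat.strong_induction_on with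
  | _ m ih =>
    intro L hL
    obtain ⟨L', rfl⟩ : ∃ L', L = L' + 1 := ⟨L - 1, by omega⟩
    have h2 : (2:ℕ)^(L'+1) = 2 * 2^L' := by ring
    rw [h2, ptm_split]
    have step1 : ∀ k, (-1:ℂ)^(p (2*k)) * ((2*k : ℕ):ℂ)^m
        + (-1:ℂ)^(p (2*k+1)) * ((2*k+1 : ℕ):ℂ)^m
        = (-1:ℂ)^(p k) * (((2*(k:ℂ)))^m - ((2*(k:ℂ))+1)^m) := by
      intro k
      rw [hpe, hneg]
      push_cast
      ring
    calc ∑ k ∈ range (2^L'), ((-1:ℂ)^(p (2*k)) * ((2*k : ℕ):ℂ)^m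
            + (-1:ℂ)^(p (2*k+1)) * ((2*k+1 : ℕ):ℂ)^m)
        = ∑ k ∈ range (2^L'), (-1:ℂ)^(p k) * (((2*(k:ℂ)))^m - ((2*(k:ℂ))+1)^m) := by
          exact Finset.sum_congr rfl fun k _ => step1 k
      _ = ∑ k ∈ range (2^L'), ∑ j ∈ range m,
            -((m.choose j : ℂ) * 2^j * ((-1:ℂ)^(p k) * (k:ℂ)^j)) := by
          refine Finset.sum_congr rfl fun k _ => ?_
          have hexp : ((2*(k:ℂ))+1)^m
              = ∑ j ∈ range (m+1), (2*(k:ℂ))^j * (1:ℂ)^(m-j) * (m.choose j) :=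
            add_pow _ _ _
          rw [hexp, Finset.sum_range_succ]
          simp only [one_pow, mul_one, Nat.choose_self, Nat.cast_one]
          have e0 : (2*(k:ℂ))^m - (∑ x ∈ range m, (2*(k:ℂ))^x * (m.choose x) + (2*(k:ℂ))^m)
              = ∑ x ∈ range m, -((2*(k:ℂ))^x * (m.choose x)) := by
            rw [Finset.sum_neg_distrib]
            ring
          rw [e0, Finset.mul_sum]
          refine Finset.sum_congr rfl fun j _ => ?_
          rw [mul_pow]
          push_cast
          ring
      _ = ∑ j ∈ range m, ∑ k ∈ range (2^L'),
            -((m.choose j : ℂ) * 2^j * ((-1:ℂ)^(p k) * (k:ℂ)^j)) := Finset.sum_comm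
      _ = ∑ j ∈ range m, -((m.choose j : ℂ) * 2^j *
            ∑ k ∈ range (2^L'), (-1:ℂ)^(p k) * (k:ℂ)^j) := by
          refine Finset.sum_congr rfl fun j _ => ?_
          rw [Finset.mul_sum, ← Finset.sum_neg_distrib]
      _ = 0 := by
          refine Finset.sum_eq_zero fun j hj => ?_
          have hjm := Finset.mem_range.mp hj
          rw [ih j hjm L' (by omega)]
          ring

private lemma ptm_hasDerivAt (c : ℂ) (x : ℝ) :
    HasDerivAt (fun θ : ℝ => Complex.exp (c * θ)) (c * Complex.exp (c * x)) x := by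
  have h1 : HasDerivAt (fun θ : ℝ => (θ:ℂ)) 1 x := by
    simpa using (hasDerivAt_id x).ofReal_comp
  have h2 := (h1.const_mul c).cexp
  simpa [mul_comm] using h2

/-- **PTM design (Theorem 1).** If `p` is the Prouhet–Thue–Morse sequence and
`N = 2^(M+1)`, then `f θ = ∑_{n<N} (-1)^{p n} e^{i n θ}` has a spectral null of
order `M` at `θ = 0`. -/
theorem ptm_spectral_null (M : ℕ) (hM : 1 ≤ M) (N : ℕ) (hN : N = 2 ^ (M + 1))
    (p : ℕ → ℕ) (hp0 : p 0 = 0) (hpe : ∀ k, p (2 * k) = p k)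
    (hpo : ∀ k, p (2 * k + 1) = 1 - p k)
    (f : ℝ → ℂ)
    (hf : ∀ θ : ℝ, f θ = ∑ n ∈ Finset.range N,
      (-1 : ℂ) ^ (p n) * Complex.exp (Complex.I * (n : ℂ) * (θ : ℂ))) :
    ∀ m : ℕ, m ≤ M → iteratedDeriv m f 0 = 0 := by
  have hd : ∀ m : ℕ, iteratedDeriv m f = fun θ : ℝ => ∑ n ∈ Finset.range N,
      (-1 : ℂ) ^ (p n) * ((Complex.I * n)^m * Complex.exp (Complex.I * (n:ℂ) * (θ : ℂ))) := by
    intro m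
    induction m with
    | zero =>
      funext θ
      rw [iteratedDeriv_zero, hf θ]
      exact Finset.sum_congr rfl fun n _ => by rw [pow_zero, one_mul, mul_assoc]
    | succ m ih =>
      funext θ
      rw [iteratedDeriv_succ, ih]
      have hder : HasDerivAt (fun θ : ℝ => ∑ n ∈ Finset.range N,
          (-1 : ℂ) ^ (p n) * ((Complex.I * n)^m * Complex.exp (Complex.I * (n:ℂ) * (θ : ℂ))))
          (∑ n ∈ Finset.range N,
            (-1 : ℂ) ^ (p n) * ((Complex.I * n)^m *
              ((Complex.I * n) * Complex.exp (Complex.I * (n:ℂ) * (θ : ℂ))))) θ := by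
        refine HasDerivAt.fun_sum fun n _ => ?_
        have h := (ptm_hasDerivAt (Complex.I * n) θ).const_mul
          ((-1 : ℂ) ^ (p n) * (Complex.I * n)^m)
        simpa [mul_assoc] using h
      rw [hder.deriv]
      exact Finset.sum_congr rfl fun n _ => by ring
  intro m hm
  rw [hd m]
  simp only [Complex.ofReal_zero, mul_zero, Complex.exp_zero, mul_one]
  have := ptm_key p hp0 hpe hpo m (M+1) (by omega)
  calc ∑ n ∈ Finset.range N, (-1 : ℂ) ^ (p n) * (Complex.I * n)^m
      = Complex.I^m * ∑ n ∈ Finset.range (2^(M+1)), (-1 : ℂ) ^ (p n) * (n:ℂ)^m := by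
        rw [hN, Finset.mul_sum]
        exact Finset.sum_congr rfl fun n _ => by rw [mul_pow]; ring
    _ = 0 := by rw [this, mul_zero]
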